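/- Let (X, d, μ) be the product of N compact connected Riemannian manifolds (X_i, d_i, μ_i) with d²(x,y) = Σ_i d_i²(x_i,y_i) and μ = ⊗_i μ_i. Then the nonzero spectrum (with multiplicity) of the MDS operator T on X equals the disjoint union of the nonzero spectra of the operators T_i for the factors: Spec(T)\{0} = ⊔_{i=1}^N (Spec(T_i)\{0}). -/

import Mathlib

set_option linter.unusedSectionVars false

open MeasureTheory
open scoped BoundedContinuousFunction

namespace MDSAux

variable {Ω : Type*} [MeasurableSpace Ω]
variable {α : Type*} [MetricSpace α] [CompactSpace α] [MeasurableSpace α] [BorelSpace α]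

/-- The MDS kernel. -/
noncomputable def ker (t u : α) : ℝ := -(dist t u ^ 2) / 2

/-- Diameter bound. -/
noncomputable def dB (α : Type*) [MetricSpace α] : ℝ := Metric.diam (Set.univ : Set α)

lemma dB_nonneg : 0 ≤ dB α := Metric.diam_nonneg

lemma dist_le_dB (t u : α) : dist t u ≤ dB α :=
  Metric.dist_le_diam_of_mem (Metric.isBounded_of_compactSpace) (Set.mem_univ t) (Set.mem_univ u)

lemma abs_ker_le (t u : α) : |ker t u| ≤ dB α ^ 2 / 2 := by
  have h1 : 0 ≤ dist t u := dist_nonneg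
  have h2 := dist_le_dB t u
  have : dist t u ^ 2 ≤ dB α ^ 2 := by nlinarith
  rw [ker, abs_div, abs_neg, abs_of_nonneg (by positivity : (0:ℝ) ≤ dist t u ^ 2)]
  simp only [abs_two]
  linarith

lemma abs_ker_sub_le (t t' u : α) : |ker t u - ker t' u| ≤ dB α * dist t t' := by
  have h1 : 0 ≤ dist t u := dist_nonneg
  have h1' : 0 ≤ dist t' u := dist_nonneg
  have h2 := dist_le_dB t u
  have h2' := dist_le_dB t' u
  have h3 : |dist t u - dist t' u| ≤ dist t t' := abs_dist_sub_le t t' u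
  have h4 : |ker t u - ker t' u| = |dist t u + dist t' u| * |dist t u - dist t' u| / 2 := by
    rw [ker, ker, div_sub_div_same, ← abs_mul, abs_div, abs_two]
    rw [show -dist t u ^ 2 - -dist t' u ^ 2 = -(dist t u ^ 2 - dist t' u ^ 2) by ring, abs_neg]
    rw [show (dist t u + dist t' u) * (dist t u - dist t' u) = dist t u ^ 2 - dist t' u ^ 2 by ring]
  rw [h4]
  have h5 : |dist t u + dist t' u| ≤ 2 * dB α := by
    rw [abs_of_nonneg (by linarith)]; linarith
  have h6 : (0:ℝ) ≤ |dist t u - dist t' u| := abs_nonneg _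
  have := mul_le_mul h5 h3 h6 (by have := dB_nonneg (α := α); linarith)
  calc |dist t u + dist t' u| * |dist t u - dist t' u| / 2 ≤ 2 * dB α * dist t t' / 2 := by linarith
    _ = dB α * dist t t' := by ring

lemma continuous_ker (t : α) : Continuous (ker t) := by
  unfold ker; fun_prop

variable (m : Measure Ω) [IsProbabilityMeasure m] (π : Ω → α)

/-- The un-centered integral-operator function. -/
noncomputable def aF (f : Ω → ℝ) : α → ℝ :=
  fun t => ∫ y, ker t (π y) * (f y - ∫ z, f z ∂m) ∂m

/-- The centered integral-operator function. -/
noncomputable def bF (f : Ω → ℝ) : α → ℝ :=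
  fun t => aF m π f t - ∫ y, aF m π f (π y) ∂m

lemma aF_congr {f g : Ω → ℝ} (h : f =ᵐ[m] g) : aF m π f = aF m π g := by
  have hint : (∫ z, f z ∂m) = ∫ z, g z ∂m := integral_congr_ae h
  funext t
  refine integral_congr_ae ?_
  filter_upwards [h] with y hy
  rw [hy, hint]

lemma bF_congr {f g : Ω → ℝ} (h : f =ᵐ[m] g) : bF m π f = bF m π g := by
  unfold bF; rw [aF_congr m π h]

variable (hπ : Measurable π)

section

include hπ

lemma integrable_ker_mul {f : Ω → ℝ} (hf : Integrable f m) (c : ℝ) (t : α) :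
    Integrable (fun y => ker t (π y) * (f y - c)) m := by
  refine Integrable.bdd_mul (c := dB α ^ 2 / 2) (hf.sub (integrable_const c)) ?_ ?_
  · exact (((continuous_ker t).measurable).comp hπ).aestronglyMeasurable
  · exact Filter.Eventually.of_forall (fun y => by
      simpa [Real.norm_eq_abs] using abs_ker_le t (π y))

lemma abs_aF_le {f : Ω → ℝ} (hf : Integrable f m) (t : α) :
    |aF m π f t| ≤ dB α ^ 2 / 2 * ∫ y, |f y - ∫ z, f z ∂m| ∂m := by
  set c := ∫ z, f z ∂m
  have h1 : |aF m π f t| ≤ ∫ y, |ker t (π y) * (f y - c)| ∂m := by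
    have := norm_integral_le_integral_norm (μ := m) (fun y => ker t (π y) * (f y - c))
    simp only [Real.norm_eq_abs] at this
    exact this
  refine h1.trans ?_
  rw [← integral_const_mul]
  refine integral_mono ((integrable_ker_mul m π hπ hf c t).abs) ?_ ?_
  · exact (hf.sub (integrable_const c)).abs.const_mul _
  · intro y
    show |ker t (π y) * (f y - c)| ≤ dB α ^ 2 / 2 * |f y - c|
    rw [abs_mul]
    exact mul_le_mul_of_nonneg_right (abs_ker_le t (π y)) (abs_nonneg _)

lemma abs_aF_sub_le {f : Ω → ℝ} (hf : Integrable f m) (t t' : α) :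
    |aF m π f t - aF m π f t'| ≤
      (dB α * ∫ y, |f y - ∫ z, f z ∂m| ∂m) * dist t t' := by
  set c := ∫ z, f z ∂m
  have h0 : aF m π f t - aF m π f t'
      = ∫ y, (ker t (π y) - ker t' (π y)) * (f y - c) ∂m := by
    rw [aF, aF, ← integral_sub (integrable_ker_mul m π hπ hf c t)
      (integrable_ker_mul m π hπ hf c t')]
    congr 1; funext y; ring
  rw [h0]
  have h1 : |∫ y, (ker t (π y) - ker t' (π y)) * (f y - c) ∂m|
      ≤ ∫ y, |(ker t (π y) - ker t' (π y)) * (f y - c)| ∂m := by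
    simpa only [Real.norm_eq_abs] using
      norm_integral_le_integral_norm (μ := m)
        (fun y => (ker t (π y) - ker t' (π y)) * (f y - c))
  refine h1.trans ?_
  have h2 : ∫ y, |(ker t (π y) - ker t' (π y)) * (f y - c)| ∂m
      ≤ ∫ y, (dB α * dist t t') * |f y - c| ∂m := by
    refine integral_mono ?_ ?_ ?_
    · refine ((integrable_ker_mul m π hπ hf c t).sub
        (integrable_ker_mul m π hπ hf c t')).abs.congr ?_
      filter_upwards with y
      simp only [Pi.sub_apply]
      rw [← sub_mul]
    · exact ((hf.sub (integrable_const c)).abs.const_mul _)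
    · intro y
      show |(ker t (π y) - ker t' (π y)) * (f y - c)| ≤ dB α * dist t t' * |f y - c|
      rw [abs_mul]
      exact mul_le_mul_of_nonneg_right (abs_ker_sub_le t t' (π y)) (abs_nonneg _)
  refine h2.trans ?_
  rw [integral_const_mul]
  ring_nf
  simp only [neg_add_eq_sub, le_refl]

end

section

include hπ

lemma lipschitz_aF {f : Ω → ℝ} (hf : Integrable f m) :
    LipschitzWith (Real.toNNReal (dB α * ∫ y, |f y - ∫ z, f z ∂m| ∂m)) (aF m π f) := by
  refine LipschitzWith.of_dist_le_mul fun t t' => ?_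
  rw [Real.dist_eq]
  refine (abs_aF_sub_le m π hπ hf t t').trans ?_
  refine mul_le_mul_of_nonneg_right ?_ dist_nonneg
  exact Real.le_coe_toNNReal _

lemma continuous_aF {f : Ω → ℝ} (hf : Integrable f m) : Continuous (aF m π f) :=
  (lipschitz_aF m π hπ hf).continuous

lemma integrable_aF_comp {f : Ω → ℝ} (hf : Integrable f m) :
    Integrable (fun y => aF m π f (π y)) m := by
  refine Integrable.mono' (integrable_const (dB α ^ 2 / 2 * ∫ y, |f y - ∫ z, f z ∂m| ∂m))
    (((continuous_aF m π hπ hf).measurable.comp hπ).aestronglyMeasurable) ?_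
  filter_upwards with y
  simpa only [Real.norm_eq_abs] using abs_aF_le m π hπ hf (π y)

lemma abs_bF_le {f : Ω → ℝ} (hf : Integrable f m) (t : α) :
    |bF m π f t| ≤ dB α ^ 2 * ∫ y, |f y - ∫ z, f z ∂m| ∂m := by
  set I := ∫ y, |f y - ∫ z, f z ∂m| ∂m with hI
  have hInn : |∫ y, aF m π f (π y) ∂m| ≤ dB α ^ 2 / 2 * I := by
    have h1 : |∫ y, aF m π f (π y) ∂m| ≤ ∫ y, |aF m π f (π y)| ∂m := by
      simpa only [Real.norm_eq_abs] using
        norm_integral_le_integral_norm (μ := m) (fun y => aF m π f (π y))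
    refine h1.trans ?_
    have h2 : (∫ (_ : Ω), dB α ^ 2 / 2 * I ∂m) = dB α ^ 2 / 2 * I := by
      simp [measure_univ]
    rw [← h2]
    refine integral_mono ?_ (integrable_const _) fun y => abs_aF_le m π hπ hf (π y)
    simpa only [Real.norm_eq_abs] using (integrable_aF_comp m π hπ hf).abs
  have h1 := abs_aF_le m π hπ hf t
  calc |bF m π f t| ≤ |aF m π f t| + |∫ y, aF m π f (π y) ∂m| := abs_sub _ _
    _ ≤ dB α ^ 2 / 2 * I + dB α ^ 2 / 2 * I := add_le_add h1 hInn
    _ = dB α ^ 2 * I := by ring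

lemma abs_bF_sub_le {f : Ω → ℝ} (hf : Integrable f m) (t t' : α) :
    |bF m π f t - bF m π f t'| ≤
      (dB α * ∫ y, |f y - ∫ z, f z ∂m| ∂m) * dist t t' := by
  have : bF m π f t - bF m π f t' = aF m π f t - aF m π f t' := by
    unfold bF; ring
  rw [this]
  exact abs_aF_sub_le m π hπ hf t t'

lemma continuous_bF {f : Ω → ℝ} (hf : Integrable f m) : Continuous (bF m π f) :=
  (continuous_aF m π hπ hf).sub continuous_const

end

/-- `bF` as a bounded continuous function. -/
noncomputable def bcf' (hπ : Measurable π) {f : Ω → ℝ} (hf : Integrable f m) : α →ᵇ ℝ :=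
  BoundedContinuousFunction.ofNormedAddCommGroup (bF m π f)
    (continuous_bF m π hπ hf)
    (dB α ^ 2 * ∫ y, |f y - ∫ z, f z ∂m| ∂m)
    (fun t => by simpa only [Real.norm_eq_abs] using abs_bF_le m π hπ hf t)

@[simp] lemma bcf'_apply (hπ : Measurable π) {f : Ω → ℝ} (hf : Integrable f m) (t : α) :
    bcf' m π hπ hf t = bF m π f t := rfl

section linearity

include hπ

lemma aF_add {f g : Ω → ℝ} (hf : Integrable f m) (hg : Integrable g m) :
    aF m π (f + g) = aF m π f + aF m π g := by
  funext t
  have hint : (∫ z, (f + g) z ∂m) = (∫ z, f z ∂m) + ∫ z, g z ∂m := by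
    simpa using integral_add hf hg
  show (∫ y, ker t (π y) * ((f y + g y) - ∫ z, (f + g) z ∂m) ∂m) = _
  rw [hint]
  have : ∀ y, ker t (π y) * ((f y + g y) - ((∫ z, f z ∂m) + ∫ z, g z ∂m))
      = ker t (π y) * (f y - ∫ z, f z ∂m) + ker t (π y) * (g y - ∫ z, g z ∂m) := by
    intro y; ring
  simp only [this]
  exact integral_add (integrable_ker_mul m π hπ hf _ t) (integrable_ker_mul m π hπ hg _ t)

lemma aF_smul (r : ℝ) {f : Ω → ℝ} (hf : Integrable f m) :
    aF m π (r • f) = r • aF m π f := by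
  funext t
  have hint : (∫ z, (r • f) z ∂m) = r * ∫ z, f z ∂m := by
    simpa using integral_smul r f
  show (∫ y, ker t (π y) * ((r • f) y - ∫ z, (r • f) z ∂m) ∂m)
      = r • ∫ y, ker t (π y) * (f y - ∫ z, f z ∂m) ∂m
  rw [hint, ← integral_smul]
  congr 1; funext y; simp; ring

lemma bF_add {f g : Ω → ℝ} (hf : Integrable f m) (hg : Integrable g m) :
    bF m π (f + g) = bF m π f + bF m π g := by
  funext t
  have h1 : (∫ y, (aF m π f (π y) + aF m π g (π y)) ∂m)
      = (∫ y, aF m π f (π y) ∂m) + ∫ y, aF m π g (π y) ∂m :=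
    integral_add (integrable_aF_comp m π hπ hf) (integrable_aF_comp m π hπ hg)
  show aF m π (f+g) t - (∫ y, aF m π (f+g) (π y) ∂m) = _
  rw [aF_add m π hπ hf hg]
  simp only [Pi.add_apply]
  rw [h1]
  show _ = bF m π f t + bF m π g t
  unfold bF
  ring

lemma bF_smul (r : ℝ) {f : Ω → ℝ} (hf : Integrable f m) :
    bF m π (r • f) = r • bF m π f := by
  funext t
  show aF m π (r • f) t - (∫ y, aF m π (r • f) (π y) ∂m) = r • bF m π f t
  rw [aF_smul m π hπ r hf]
  simp only [Pi.smul_apply, smul_eq_mul, integral_const_mul]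
  unfold bF
  ring

end linearity

section opLp

/-- An `Lp` (p=2) function on a probability space is integrable. -/
lemma l2integrable (f : Lp ℝ 2 m) : Integrable (⇑f) m :=
  (Lp.memLp f).integrable one_le_two

lemma integral_abs_le_norm (f : Lp ℝ 2 m) : (∫ y, |f y| ∂m) ≤ ‖f‖ := by
  have h1 : (∫ y, ‖f y‖ ∂m) = (∫⁻ y, ‖f y‖ₑ ∂m).toReal :=
    integral_norm_eq_lintegral_enorm (Lp.aestronglyMeasurable f)
  have h2 : eLpNorm (⇑f) 1 m ≤ eLpNorm (⇑f) 2 m :=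
    eLpNorm_le_eLpNorm_of_exponent_le (by norm_num) (Lp.aestronglyMeasurable f)
  have h3 : (∫ y, |f y| ∂m) = (eLpNorm (⇑f) 1 m).toReal := by
    simp only [← Real.norm_eq_abs]
    rw [h1, eLpNorm_one_eq_lintegral_enorm]
  rw [h3, Lp.norm_def]
  exact ENNReal.toReal_mono (Lp.eLpNorm_ne_top f) h2

lemma integral_abs_sub_le (f : Lp ℝ 2 m) :
    (∫ y, |f y - ∫ z, f z ∂m| ∂m) ≤ 2 * ‖f‖ := by
  have hint := l2integrable m f
  have h1 : (∫ y, |f y - ∫ z, f z ∂m| ∂m) ≤ ∫ y, (|f y| + |∫ z, f z ∂m|) ∂m := by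
    refine integral_mono (hint.sub (integrable_const _)).abs
      (hint.abs.add (integrable_const _)) fun y => ?_
    exact (abs_sub _ _)
  have h2 : (∫ y, (|f y| + |∫ z, f z ∂m|) ∂m)
      = (∫ y, |f y| ∂m) + |∫ z, f z ∂m| := by
    rw [integral_add hint.abs (integrable_const _)]
    simp [measure_univ]
  have h3 : |∫ z, f z ∂m| ≤ ∫ y, |f y| ∂m := by
    simpa only [Real.norm_eq_abs] using norm_integral_le_integral_norm (μ := m) (⇑f)
  have h4 := integral_abs_le_norm m f
  linarith

variable (ν : Measure α) [IsProbabilityMeasure ν]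

/-- The MDS operator, as a map `Lp ℝ 2 m → Lp ℝ 2 ν`. -/
noncomputable def opLp (hπ : Measurable π) (f : Lp ℝ 2 m) : Lp ℝ 2 ν :=
  BoundedContinuousFunction.toLp 2 ν ℝ (bcf' m π hπ (l2integrable m f))

lemma coeFn_opLp (hπ : Measurable π) (f : Lp ℝ 2 m) :
    ⇑(opLp m π ν hπ f) =ᵐ[ν] bF m π ⇑f :=
  BoundedContinuousFunction.coeFn_toLp 2 ν ℝ _

lemma opLp_add (hπ : Measurable π) (f g : Lp ℝ 2 m) :
    opLp m π ν hπ (f + g) = opLp m π ν hπ f + opLp m π ν hπ g := by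
  unfold opLp
  rw [← map_add]
  congr 1
  ext t
  simp only [bcf'_apply, BoundedContinuousFunction.coe_add, Pi.add_apply]
  rw [bF_congr m π (Lp.coeFn_add f g), bF_add m π hπ (l2integrable m f) (l2integrable m g)]
  rfl

lemma opLp_smul (hπ : Measurable π) (r : ℝ) (f : Lp ℝ 2 m) :
    opLp m π ν hπ (r • f) = r • opLp m π ν hπ f := by
  unfold opLp
  rw [← _root_.map_smul]
  congr 1
  ext t
  simp only [bcf'_apply, BoundedContinuousFunction.coe_smul, Pi.smul_apply]
  rw [bF_congr m π (Lp.coeFn_smul r f), bF_smul m π hπ r (l2integrable m f)]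
  rfl

lemma opLp_zero (hπ : Measurable π) (f : Lp ℝ 2 m) (h : bF m π ⇑f = 0) :
    opLp m π ν hπ f = 0 := by
  unfold opLp
  have : bcf' m π hπ (l2integrable m f) = 0 := by
    ext t
    simp [h]
  rw [this, map_zero]

end opLp

section product

variable {ι : Type*} [Fintype ι] {X : ι → Type*} [∀ i, MeasurableSpace (X i)]
  (μ : ∀ i, Measure (X i)) [∀ i, IsProbabilityMeasure (μ i)]

lemma measurePreserving_eval (i : ι) :
    MeasurePreserving (fun y : ∀ j, X j => y i) (Measure.pi μ) (μ i) := by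
  classical
  refine ⟨measurable_pi_apply i, ?_⟩
  ext s hs
  rw [Measure.map_apply (measurable_pi_apply i) hs]
  have hpre : (fun y : ∀ j, X j => y i) ⁻¹' s
      = Set.pi Set.univ (Function.update (fun j => (Set.univ : Set (X j))) i s) :=
    Set.eval_preimage
  rw [hpre, Measure.pi_pi]
  rw [show (∏ j, (μ j) (Function.update (fun j => (Set.univ : Set (X j))) i s j))
      = (μ i) s * ∏ j ∈ Finset.univ.erase i, (μ j)
        (Function.update (fun j => (Set.univ : Set (X j))) i s j) from ?_]
  · rw [Finset.prod_eq_one, mul_one]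
    intro j hj
    rw [Function.update_of_ne (Finset.mem_erase.mp hj).1]
    simp
  · rw [← Finset.prod_erase_mul _ _ (Finset.mem_univ i), Function.update_self, mul_comm]

lemma measurePreserving_evalPair {i j : ι} (hij : i ≠ j) :
    MeasurePreserving (fun y : ∀ k, X k => (y i, y j)) (Measure.pi μ)
      ((μ i).prod (μ j)) := by
  classical
  refine ⟨(measurable_pi_apply i).prodMk (measurable_pi_apply j), ?_⟩
  refine (Measure.prod_eq fun s t hs ht => ?_).symm
  rw [Measure.map_apply ((measurable_pi_apply i).prodMk (measurable_pi_apply j)) (hs.prod ht)]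
  have hpre : (fun y : ∀ k, X k => (y i, y j)) ⁻¹' (s ×ˢ t)
      = Set.pi Set.univ (Function.update (Function.update
          (fun k => (Set.univ : Set (X k))) i s) j t) := by
    ext y
    simp only [Set.mem_preimage, Set.mem_prod, Set.mem_pi, Set.mem_univ, true_implies]
    constructor
    · rintro ⟨h1, h2⟩ k
      rcases eq_or_ne k j with rfl | hkj
      · rwa [Function.update_self]
      rcases eq_or_ne k i with rfl | hki
      · rwa [Function.update_of_ne hij, Function.update_self]
      · rw [Function.update_of_ne hkj, Function.update_of_ne hki]
        trivial
    · intro h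
      refine ⟨?_, ?_⟩
      · have := h i
        rwa [Function.update_of_ne hij, Function.update_self] at this
      · have := h j
        rwa [Function.update_self] at this
  rw [hpre, Measure.pi_pi]
  rw [← Finset.prod_erase_mul _ _ (Finset.mem_univ j), Function.update_self]
  rw [← Finset.prod_erase_mul _ _ (Finset.mem_erase.mpr ⟨hij, Finset.mem_univ i⟩)]
  rw [Function.update_of_ne hij, Function.update_self]
  rw [Finset.prod_eq_one, one_mul, mul_comm]
  intro k hk
  have hk1 := (Finset.mem_erase.mp hk).1
  have hk2 := (Finset.mem_erase.mp (Finset.mem_erase.mp hk).2).1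
  rw [Function.update_of_ne hk2, Function.update_of_ne hk1]
  simp

lemma integral_comp_eval {i : ι} {F : X i → ℝ} (hF : AEStronglyMeasurable F (μ i)) :
    (∫ y, F (y i) ∂Measure.pi μ) = ∫ u, F u ∂μ i := by
  rw [← (measurePreserving_eval μ i).map_eq] at hF ⊢
  exact (integral_map (measurable_pi_apply i).aemeasurable hF).symm

lemma integral_eval_mul {i j : ι} (hij : i ≠ j) {F : X i → ℝ} {G : X j → ℝ}
    (hF : AEStronglyMeasurable F (μ i)) (hG : AEStronglyMeasurable G (μ j)) :
    (∫ y, F (y i) * G (y j) ∂Measure.pi μ) = (∫ u, F u ∂μ i) * ∫ u, G u ∂μ j := by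
  have hmp := measurePreserving_evalPair μ hij
  have hFG : AEStronglyMeasurable (fun z : X i × X j => F z.1 * G z.2) ((μ i).prod (μ j)) := by
    exact (hF.comp_quasiMeasurePreserving Measure.quasiMeasurePreserving_fst).mul
      (hG.comp_quasiMeasurePreserving Measure.quasiMeasurePreserving_snd)
  have h1 : (∫ y, F (y i) * G (y j) ∂Measure.pi μ)
      = ∫ z, F z.1 * G z.2 ∂((Measure.pi μ).map (fun y => (y i, y j))) := by
    exact (integral_map hmp.measurable.aemeasurable (by rwa [hmp.map_eq])).symm
  rw [h1, hmp.map_eq]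
  exact integral_prod_mul F G

/-- a.e.-equality composes with a measure preserving map. -/
lemma ae_comp_eval {i : ι} {F G : X i → ℝ} (h : F =ᵐ[μ i] G) :
    (fun y : ∀ j, X j => F (y i)) =ᵐ[Measure.pi μ] fun y => G (y i) :=
  (measurePreserving_eval μ i).quasiMeasurePreserving.ae_eq_comp h

end product

section compactness

variable {α : Type*} [MetricSpace α] [CompactSpace α]

lemma isCompact_lipBall (L B : ℝ) :
    IsCompact {h : α →ᵇ ℝ | (∀ t t', dist (h t) (h t') ≤ L * dist t t') ∧ ∀ t, |h t| ≤ B} := by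
  refine BoundedContinuousFunction.arzela_ascoli₂ (Set.Icc (-B) B) isCompact_Icc _ ?_ ?_ ?_
  · have hset : {h : α →ᵇ ℝ | (∀ t t', dist (h t) (h t') ≤ L * dist t t') ∧ ∀ t, |h t| ≤ B}
        = (⋂ t, ⋂ t', {h : α →ᵇ ℝ | dist (h t) (h t') ≤ L * dist t t'})
          ∩ ⋂ t, {h : α →ᵇ ℝ | |h t| ≤ B} := by
      ext h
      simp only [Set.mem_setOf_eq, Set.mem_inter_iff, Set.mem_iInter]
    rw [hset]
    refine IsClosed.inter ?_ ?_
    · refine isClosed_iInter fun t => isClosed_iInter fun t' => ?_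
      exact isClosed_le (Continuous.dist
        (continuous_eval_const t)
        (continuous_eval_const t')) continuous_const
    · refine isClosed_iInter fun t => ?_
      exact isClosed_le (continuous_abs.comp
        (continuous_eval_const t)) continuous_const
  · rintro h t ⟨_, hB⟩
    exact Set.mem_Icc.mpr (abs_le.mp (hB t))
  · refine Metric.equicontinuous_of_continuity_modulus (fun d => L * d) ?_ _ ?_
    · have : Filter.Tendsto (fun d : ℝ => L * d) (nhds 0) (nhds (L * 0)) :=
        (continuous_const.mul continuous_id).tendsto 0
      simpa using this
    · rintro x y ⟨h, hh⟩
      exact hh.1 x y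

end compactness

section findim

variable {α : Type*} [MetricSpace α] [CompactSpace α] [MeasurableSpace α] [BorelSpace α]
variable (ν : Measure α) [IsProbabilityMeasure ν]

set_option synthInstance.maxHeartbeats 1000000 in
set_option maxHeartbeats 1000000 in
lemma finiteDimensional_eigenspace (S : Lp ℝ 2 ν →L[ℝ] Lp ℝ 2 ν)
    (hS : ∀ f : Lp ℝ 2 ν, S f = opLp ν id ν measurable_id f) (c : ℝ) (hc : c ≠ 0) :
    FiniteDimensional ℝ
      (Module.End.eigenspace (S : Module.End ℝ (Lp ℝ 2 ν)) c) := by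
  set E := Module.End.eigenspace (S : Module.End ℝ (Lp ℝ 2 ν)) c with hE
  have hmem : ∀ f : Lp ℝ 2 ν, f ∈ E ↔ S f = c • f := by
    intro f
    rw [hE, Module.End.mem_eigenspace_iff]
    rfl
  -- the eigenspace is closed
  have hE_closed : IsClosed (E : Set (Lp ℝ 2 ν)) := by
    have : (E : Set (Lp ℝ 2 ν)) = (fun f => S f - c • f) ⁻¹' {0} := by
      ext f
      simp only [SetLike.mem_coe, hmem, Set.mem_preimage, Set.mem_singleton_iff, sub_eq_zero]
    rw [this]
    exact IsClosed.preimage (S.continuous.sub (continuous_id.const_smul c)) isClosed_singleton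
  -- the compact set of candidate functions
  set L0 : ℝ := dB α * 2 with hL0
  set B0 : ℝ := dB α ^ 2 * 2 with hB0
  set K : Set (Lp ℝ 2 ν) :=
    (fun h : α →ᵇ ℝ => c⁻¹ • (BoundedContinuousFunction.toLp 2 ν ℝ h)) ''
      {h : α →ᵇ ℝ | (∀ t t', dist (h t) (h t') ≤ L0 * dist t t') ∧ ∀ t, |h t| ≤ B0} with hK
  have hK_compact : IsCompact K :=
    (isCompact_lipBall L0 B0).image
      ((BoundedContinuousFunction.toLp (E := ℝ) 2 ν ℝ).continuous.const_smul c⁻¹)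
  have hsub : Subtype.val '' (Metric.closedBall (0 : ↥E) 1) ⊆ K := by
    rintro _ ⟨g, hg, rfl⟩
    have hgE : (g : Lp ℝ 2 ν) ∈ E := g.2
    have hgnorm : ‖(g : Lp ℝ 2 ν)‖ ≤ 1 := by
      have := Metric.mem_closedBall.mp hg
      rwa [dist_zero_right] at this
    have hgeig : S (g : Lp ℝ 2 ν) = c • (g : Lp ℝ 2 ν) := (hmem _).mp hgE
    have hI : (∫ y, |(g : Lp ℝ 2 ν) y - ∫ z, (g : Lp ℝ 2 ν) z ∂ν| ∂ν) ≤ 2 :=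
      (integral_abs_sub_le ν (g : Lp ℝ 2 ν)).trans (by linarith)
    have hInonneg : (0:ℝ) ≤ ∫ y, |(g : Lp ℝ 2 ν) y - ∫ z, (g : Lp ℝ 2 ν) z ∂ν| ∂ν :=
      integral_nonneg fun y => abs_nonneg _
    refine ⟨bcf' ν id measurable_id (l2integrable ν (g : Lp ℝ 2 ν)), ⟨?_, ?_⟩, ?_⟩
    · intro t t'
      rw [bcf'_apply, bcf'_apply, Real.dist_eq]
      refine (abs_bF_sub_le ν id measurable_id (l2integrable ν _) t t').trans ?_
      rw [hL0]
      have hd := dB_nonneg (α := α)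
      have hdist : (0:ℝ) ≤ dist t t' := dist_nonneg
      exact mul_le_mul_of_nonneg_right (mul_le_mul_of_nonneg_left hI hd) hdist
    · intro t
      rw [bcf'_apply]
      refine (abs_bF_le ν id measurable_id (l2integrable ν _) t).trans ?_
      rw [hB0]
      exact mul_le_mul_of_nonneg_left hI (sq_nonneg _)
    · show c⁻¹ • BoundedContinuousFunction.toLp 2 ν ℝ _ = (g : Lp ℝ 2 ν)
      have : BoundedContinuousFunction.toLp 2 ν ℝ
          (bcf' ν id measurable_id (l2integrable ν (g : Lp ℝ 2 ν))) = S (g : Lp ℝ 2 ν) := by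
        rw [hS]
        rfl
      rw [this, hgeig, smul_smul, inv_mul_cancel₀ hc, one_smul]
  have hval_closed : IsClosed (Subtype.val '' (Metric.closedBall (0 : ↥E) 1)) := by
    have : Subtype.val '' (Metric.closedBall (0 : ↥E) 1)
        = (E : Set (Lp ℝ 2 ν)) ∩ Metric.closedBall 0 1 := by
      ext f
      constructor
      · rintro ⟨g, hg, rfl⟩
        refine ⟨g.2, ?_⟩
        have := Metric.mem_closedBall.mp hg
        rw [Metric.mem_closedBall]
        rwa [dist_zero_right] at this ⊢
      · rintro ⟨hfE, hf1⟩
        refine ⟨⟨f, hfE⟩, ?_, rfl⟩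
        rw [Metric.mem_closedBall] at hf1 ⊢
        rwa [dist_zero_right] at hf1 ⊢
    rw [this]
    exact hE_closed.inter Metric.isClosed_closedBall
  have hcb : IsCompact (Metric.closedBall (0 : ↥E) 1) := by
    rw [Topology.IsEmbedding.isCompact_iff Topology.IsEmbedding.subtypeVal]
    exact hK_compact.of_isClosed_subset hval_closed hsub
  exact FiniteDimensional.of_isCompact_closedBall₀ ℝ one_pos hcb

end findim

section coesum

variable {Ω : Type*} [MeasurableSpace Ω] (m : Measure Ω)

lemma coeFn_finset_sum {δ : Type*} (s : Finset δ) (F : δ → Lp ℝ 2 m) :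
    ⇑(∑ i ∈ s, F i) =ᵐ[m] fun x => ∑ i ∈ s, (F i : Ω → ℝ) x := by
  classical
  induction s using Finset.induction_on with
  | empty => simp only [Finset.sum_empty]; exact Lp.coeFn_zero ℝ 2 m
  | insert _ _ hnot ih =>
    rename_i a s'
    rw [Finset.sum_insert hnot]
    refine (Lp.coeFn_add _ _).trans ?_
    filter_upwards [ih] with x hx
    simp only [Pi.add_apply, hx, Finset.sum_insert hnot]

end coesum

end MDSAux

open MDSAux

/-- The pointwise formula for the MDS operator `T = P ∘ K ∘ P` associated with a kernel `k`
and a probability measure `μ`, where `K` is integration against `k` and `P` is the projection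
onto the orthogonal complement of constants. -/
noncomputable def mdsFormula {X : Type*} [MeasurableSpace X] (k : X → X → ℝ) (μ : Measure X)
    (f : X → ℝ) (x : X) : ℝ :=
  (∫ y, k x y * (f y - ∫ z, f z ∂μ) ∂μ)
    - ∫ x', (∫ y, k x' y * (f y - ∫ z, f z ∂μ) ∂μ) ∂μ

set_option maxHeartbeats 1600000 in
set_option synthInstance.maxHeartbeats 400000 in
/-- For a product `(X,d,μ)` of `N` compact connected Riemannian manifolds
`(X_i,d_i,μ_i)` (with `d² = Σ_i d_i²` and `μ = ⊗_i μ_i`), the nonzero spectrum with multiplicity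
of the MDS operator `T` is the disjoint union of the nonzero spectra of the factor operators
`T_i`: for every `c ≠ 0` the multiplicity of `c` as an eigenvalue of `T` equals the sum of its
multiplicities for the `T_i`. -/
theorem mds_spectrum_of_product
    (N : ℕ) (X : Fin N → Type*)
    [∀ i, MetricSpace (X i)] [∀ i, CompactSpace (X i)] [∀ i, ConnectedSpace (X i)]
    [∀ i, MeasurableSpace (X i)] [∀ i, BorelSpace (X i)]
    (μ : ∀ i, Measure (X i)) [∀ i, IsProbabilityMeasure (μ i)]
    (T : Lp ℝ 2 (Measure.pi μ) →L[ℝ] Lp ℝ 2 (Measure.pi μ))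
    (Ti : ∀ i, Lp ℝ 2 (μ i) →L[ℝ] Lp ℝ 2 (μ i))
    (hT : ∀ f : Lp ℝ 2 (Measure.pi μ),
      ⇑(T f) =ᵐ[Measure.pi μ]
        mdsFormula (fun x y => -(∑ i, dist (x i) (y i) ^ 2) / 2) (Measure.pi μ) f)
    (hTi : ∀ i, ∀ f : Lp ℝ 2 (μ i),
      ⇑(Ti i f) =ᵐ[μ i] mdsFormula (fun x y => -(dist x y) ^ 2 / 2) (μ i) f) :
    ∀ c : ℝ, c ≠ 0 →
      Module.finrank ℝ (Module.End.eigenspace (T : Module.End ℝ (Lp ℝ 2 (Measure.pi μ))) c)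
        = ∑ i, Module.finrank ℝ (Module.End.eigenspace (Ti i : Module.End ℝ (Lp ℝ 2 (μ i))) c) := by
  classical
  intro c hc
  have hev : ∀ i, MeasurePreserving (fun y : ∀ j, X j => y i) (Measure.pi μ) (μ i) :=
    fun i => MDSAux.measurePreserving_eval μ i
  have hmeas : ∀ i, Measurable (fun y : ∀ j, X j => y i) := fun i => measurable_pi_apply i
  -- the pull-back maps
  set Φ : ∀ i, Lp ℝ 2 (μ i) →ₗ[ℝ] Lp ℝ 2 (Measure.pi μ) :=
    fun i => Lp.compMeasurePreservingₗ ℝ (fun y : ∀ j, X j => y i) (hev i) with hΦ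
  have hΦcoe : ∀ i (g : Lp ℝ 2 (μ i)),
      ⇑(Φ i g) =ᵐ[(Measure.pi μ)] fun y : ∀ j, X j => g (y i) := by
    intro i g
    exact Lp.coeFn_compMeasurePreserving g (hev i)
  -- the component operators
  set B : ∀ i, Lp ℝ 2 (Measure.pi μ) →ₗ[ℝ] Lp ℝ 2 (μ i) := fun i =>
    { toFun := opLp (Measure.pi μ) (fun y : ∀ j, X j => y i) (μ i) (hmeas i)
      map_add' := opLp_add (Measure.pi μ) _ (μ i) (hmeas i)
      map_smul' := opLp_smul (Measure.pi μ) _ (μ i) (hmeas i) } with hB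
  have hBcoe : ∀ i (f : Lp ℝ 2 (Measure.pi μ)),
      ⇑(B i f) =ᵐ[μ i] bF (Measure.pi μ) (fun y : ∀ j, X j => y i) ⇑f := by
    intro i f
    exact coeFn_opLp (Measure.pi μ) _ (μ i) (hmeas i) f
  -- Claim 0 : the one-variable operators agree with `opLp`
  have hTiS : ∀ i (g : Lp ℝ 2 (μ i)),
      Ti i g = opLp (μ i) id (μ i) measurable_id g := by
    intro i g
    refine Lp.ext ((hTi i g).trans (.trans ?_ (coeFn_opLp (μ i) id (μ i) measurable_id g).symm))
    refine Filter.EventuallyEq.of_eq ?_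
    rfl
  -- Claim 1 : `B i ∘ Φ i` is the one-variable operator
  have hBΦ : ∀ i (g : Lp ℝ 2 (μ i)),
      B i (Φ i g) = opLp (μ i) id (μ i) measurable_id g := by
    intro i g
    show opLp (Measure.pi μ) _ (μ i) (hmeas i) (Φ i g) = _
    unfold opLp
    congr 1
    ext t
    simp only [bcf'_apply]
    have h1 : bF (Measure.pi μ) (fun y : ∀ j, X j => y i) ⇑(Φ i g)
        = bF (Measure.pi μ) (fun y : ∀ j, X j => y i) (fun y => g (y i)) :=
      bF_congr (Measure.pi μ) _ (hΦcoe i g)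
    rw [h1]
    -- change of variables
    have hconst : (∫ z, g (z i) ∂(Measure.pi μ)) = ∫ u, g u ∂μ i :=
      MDSAux.integral_comp_eval μ (Lp.aestronglyMeasurable g)
    have haF : aF (Measure.pi μ) (fun y : ∀ j, X j => y i) (fun y => g (y i))
        = aF (μ i) id ⇑g := by
      funext t'
      show (∫ y, ker t' (y i) * (g (y i) - ∫ z, g (z i) ∂(Measure.pi μ)) ∂(Measure.pi μ)) = _
      rw [hconst]
      have := MDSAux.integral_comp_eval μ (i := i)
        (F := fun u => ker t' u * (g u - ∫ u', g u' ∂μ i))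
        (((continuous_ker t').aestronglyMeasurable).mul
          ((Lp.aestronglyMeasurable g).sub aestronglyMeasurable_const))
      rw [this]
      rfl
    show aF (Measure.pi μ) _ (fun y => g (y i)) t - (∫ y, aF (Measure.pi μ) _ (fun y' => g (y' i)) (y i) ∂(Measure.pi μ)) = _
    rw [haF]
    have hcent : (∫ y, aF (μ i) id (⇑g) (y i) ∂(Measure.pi μ)) = ∫ u, aF (μ i) id (⇑g) u ∂μ i :=
      MDSAux.integral_comp_eval μ
        ((continuous_aF (μ i) id measurable_id (l2integrable (μ i) g)).aestronglyMeasurable)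
    rw [hcent]
    rfl
  -- Claim 2 : cross terms vanish
  have hBΦ0 : ∀ i j, i ≠ j → ∀ g : Lp ℝ 2 (μ j), B i (Φ j g) = 0 := by
    intro i j hij g
    show opLp (Measure.pi μ) _ (μ i) (hmeas i) (Φ j g) = 0
    refine opLp_zero (Measure.pi μ) _ (μ i) (hmeas i) _ ?_
    have h1 : bF (Measure.pi μ) (fun y : ∀ j', X j' => y i) ⇑(Φ j g)
        = bF (Measure.pi μ) (fun y : ∀ j', X j' => y i) (fun y => g (y j)) :=
      bF_congr (Measure.pi μ) _ (hΦcoe j g)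
    rw [h1]
    have hconst : (∫ z, g (z j) ∂(Measure.pi μ)) = ∫ u, g u ∂μ j :=
      MDSAux.integral_comp_eval μ (Lp.aestronglyMeasurable g)
    have haF : aF (Measure.pi μ) (fun y : ∀ j', X j' => y i) (fun y => g (y j)) = 0 := by
      funext t
      show (∫ y, ker t (y i) * (g (y j) - ∫ z, g (z j) ∂(Measure.pi μ)) ∂(Measure.pi μ)) = 0
      rw [hconst]
      rw [integral_eval_mul μ hij (F := fun u => ker t u)
        (G := fun u => g u - ∫ u', g u' ∂μ j)
        ((continuous_ker t).aestronglyMeasurable)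
        ((Lp.aestronglyMeasurable g).sub aestronglyMeasurable_const)]
      have : (∫ u, (g u - ∫ u', g u' ∂μ j) ∂μ j) = 0 := by
        rw [integral_sub (l2integrable (μ j) g) (integrable_const _)]
        simp [measure_univ]
      rw [this, mul_zero]
    funext t
    show aF (Measure.pi μ) _ (fun y => g (y j)) t - (∫ y, aF (Measure.pi μ) _ (fun y' => g (y' j)) (y i) ∂(Measure.pi μ)) = 0
    rw [haF]
    simp
  -- Claim 3 : master decomposition
  have hmaster : ∀ f : Lp ℝ 2 (Measure.pi μ), T f = ∑ i, Φ i (B i f) := by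
    intro f
    have hfint : Integrable (⇑f) (Measure.pi μ) := l2integrable (Measure.pi μ) f
    set cst := ∫ z, f z ∂(Measure.pi μ) with hcst
    -- pointwise identity for the kernel sum
    have hker : ∀ x y : ∀ j, X j,
        (-(∑ i, dist (x i) (y i) ^ 2) / 2) * (f y - cst)
          = ∑ i, ker (x i) (y i) * (f y - cst) := by
      intro x y
      rw [show (-(∑ i, dist (x i) (y i) ^ 2) / 2) = ∑ i, ker (x i) (y i) by
        unfold ker
        rw [← Finset.sum_div, ← Finset.sum_neg_distrib]]
      rw [Finset.sum_mul]
    have hinner : ∀ x : ∀ j, X j,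
        (∫ y, (-(∑ i, dist (x i) (y i) ^ 2) / 2) * (f y - cst) ∂(Measure.pi μ))
          = ∑ i, aF (Measure.pi μ) (fun y : ∀ j, X j => y i) ⇑f (x i) := by
      intro x
      rw [integral_congr_ae (Filter.EventuallyEq.of_eq (funext fun y => hker x y))]
      rw [integral_finset_sum Finset.univ
        (fun i _ => integrable_ker_mul (Measure.pi μ) _ (hmeas i) hfint cst (x i))]
      rfl
    have hpoint : ∀ x : ∀ j, X j,
        mdsFormula (fun x y => -(∑ i, dist (x i) (y i) ^ 2) / 2) (Measure.pi μ) ⇑f x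
          = ∑ i, bF (Measure.pi μ) (fun y : ∀ j, X j => y i) ⇑f (x i) := by
      intro x
      show (∫ y, (-(∑ i, dist (x i) (y i) ^ 2) / 2) * (f y - cst) ∂(Measure.pi μ))
          - (∫ x', ∫ y, (-(∑ i, dist (x' i) (y i) ^ 2) / 2) * (f y - cst) ∂(Measure.pi μ) ∂(Measure.pi μ)) = _
      rw [hinner x]
      rw [integral_congr_ae (Filter.EventuallyEq.of_eq (funext fun x' => hinner x'))]
      rw [integral_finset_sum Finset.univ
        (fun i _ => integrable_aF_comp (Measure.pi μ) _ (hmeas i) hfint)]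
      rw [← Finset.sum_sub_distrib]
      rfl
    -- now compare both sides almost everywhere
    refine Lp.ext ?_
    have hrhs : ⇑(∑ i, Φ i (B i f)) =ᵐ[(Measure.pi μ)]
        fun x => ∑ i, bF (Measure.pi μ) (fun y : ∀ j, X j => y i) (⇑f) (x i) := by
      have hterm : ∀ i : Fin N, ⇑(Φ i (B i f)) =ᵐ[(Measure.pi μ)]
          fun x => bF (Measure.pi μ) (fun y : ∀ j, X j => y i) (⇑f) (x i) := by
        intro i
        refine (hΦcoe i (B i f)).trans ?_
        exact ae_comp_eval μ (hBcoe i f)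
      have hall : ∀ᵐ x ∂(Measure.pi μ), ∀ i : Fin N,
          ⇑(Φ i (B i f)) x = bF (Measure.pi μ) (fun y : ∀ j, X j => y i) (⇑f) (x i) :=
        ae_all_iff.mpr hterm
      filter_upwards [coeFn_finset_sum (Measure.pi μ) Finset.univ (fun i => Φ i (B i f)), hall] with x hx hx2
      rw [hx]
      exact Finset.sum_congr rfl fun i _ => hx2 i
    refine (hT f).trans ?_
    refine (Filter.EventuallyEq.of_eq (funext hpoint)).trans hrhs.symm
  -- membership criteria for eigenspaces
  have hmemT : ∀ f : Lp ℝ 2 (Measure.pi μ),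
      f ∈ Module.End.eigenspace (T : Module.End ℝ (Lp ℝ 2 (Measure.pi μ))) c ↔ T f = c • f := by
    intro f
    rw [Module.End.mem_eigenspace_iff]
    rfl
  have hmemTi : ∀ i (g : Lp ℝ 2 (μ i)),
      g ∈ Module.End.eigenspace (Ti i : Module.End ℝ (Lp ℝ 2 (μ i))) c ↔ Ti i g = c • g := by
    intro i g
    rw [Module.End.mem_eigenspace_iff]
    rfl
  -- key component computation
  have hBsum : ∀ i (g : ∀ j, Lp ℝ 2 (μ j)),
      B i (∑ j, Φ j (g j)) = Ti i (g i) := by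
    intro i g
    rw [map_sum]
    rw [Finset.sum_eq_single i]
    · rw [hBΦ i (g i), hTiS i (g i)]
    · intro j _ hji
      exact hBΦ0 i j (Ne.symm hji) (g j)
    · intro hnot
      exact absurd (Finset.mem_univ i) hnot
  -- eigenvector components
  have hcomp : ∀ f : Lp ℝ 2 (Measure.pi μ), T f = c • f → ∀ i, Ti i (B i f) = c • (B i f) := by
    intro f hf i
    have h1 : (∑ j, Φ j (B j f)) = c • f := by rw [← hmaster f, hf]
    have h2 : B i (∑ j, Φ j (B j f)) = c • (B i f) := by
      rw [h1, _root_.map_smul]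
    rw [hBsum i (fun j => B j f)] at h2
    exact h2
  -- finite dimensionality of the factor eigenspaces
  have hfd : ∀ i, FiniteDimensional ℝ
      (Module.End.eigenspace (Ti i : Module.End ℝ (Lp ℝ 2 (μ i))) c) := by
    intro i
    exact finiteDimensional_eigenspace (μ i) (Ti i) (hTiS i) c hc
  -- the linear equivalence between the eigenspaces
  set E := Module.End.eigenspace (T : Module.End ℝ (Lp ℝ 2 (Measure.pi μ))) c with hEdef
  set Ei : ∀ i, Submodule ℝ (Lp ℝ 2 (μ i)) :=
    fun i => Module.End.eigenspace (Ti i : Module.End ℝ (Lp ℝ 2 (μ i))) c with hEidef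
  have e : ↥E ≃ₗ[ℝ] ∀ i, ↥(Ei i) := by
    refine
      { toFun := fun f => fun i => ⟨c⁻¹ • B i f.1, ?_⟩
        map_add' := ?_
        map_smul' := ?_
        invFun := fun g => ⟨∑ i, Φ i (g i).1, ?_⟩
        left_inv := ?_
        right_inv := ?_ }
    · -- membership of components
      rw [hEidef, hmemTi]
      rw [_root_.map_smul, hcomp f.1 ((hmemT f.1).mp f.2) i, smul_comm]
    · intro f g
      funext i
      apply Subtype.ext
      show c⁻¹ • B i (f.1 + g.1) = c⁻¹ • B i f.1 + c⁻¹ • B i g.1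
      rw [_root_.map_add, smul_add]
    · intro r f
      funext i
      apply Subtype.ext
      show c⁻¹ • B i (r • f.1) = r • (c⁻¹ • B i f.1)
      rw [_root_.map_smul, smul_comm]
    · -- membership of the sum
      rw [hEdef, hmemT, hmaster]
      have : ∀ j, B j (∑ i, Φ i ((g i) : Lp ℝ 2 (μ _))) = c • (g j).1 := by
        intro j
        rw [hBsum j (fun i => (g i).1)]
        exact (hmemTi j (g j).1).mp (g j).2
      calc (∑ j, Φ j (B j (∑ i, Φ i (g i).1)))
          = ∑ j, Φ j (c • (g j).1) := by
            refine Finset.sum_congr rfl fun j _ => ?_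
            rw [this j]
        _ = c • ∑ j, Φ j ((g j).1) := by
            rw [Finset.smul_sum]
            exact Finset.sum_congr rfl fun j _ => _root_.map_smul _ _ _
    · -- left inverse
      intro f
      apply Subtype.ext
      show (∑ i, Φ i (c⁻¹ • B i f.1)) = f.1
      have : (∑ i, Φ i (c⁻¹ • B i f.1)) = c⁻¹ • ∑ i, Φ i (B i f.1) := by
        rw [Finset.smul_sum]
        exact Finset.sum_congr rfl fun i _ => _root_.map_smul _ _ _
      rw [this, ← hmaster f.1, (hmemT f.1).mp f.2, smul_smul, inv_mul_cancel₀ hc, one_smul]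
    · -- right inverse
      intro g
      funext i
      apply Subtype.ext
      show c⁻¹ • B i (∑ j, Φ j ((g j) : Lp ℝ 2 (μ _))) = (g i).1
      rw [hBsum i (fun j => (g j).1), (hmemTi i (g i).1).mp (g i).2,
        smul_smul, inv_mul_cancel₀ hc, one_smul]
  -- conclude on dimensions
  haveI : ∀ i, FiniteDimensional ℝ ↥(Ei i) := hfd
  rw [e.finrank_eq]
  exact Module.finrank_pi_fintype ℝ
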